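/- Let A = [a_ij] be an n×n real symmetric matrix such that: (a) the graph G_A (vertices v_1,...,v_n, edge between distinct v_i,v_j iff a_ij ≠ 0) is connected; (b) a_ij ≥ 0 for i ≠ j; (c) there exist positive reals m_1,...,m_n with ∑_i m_i a_ij = 0 for all j (so the strictness condition fails). Then rank A = n − 1. -/

import Mathlib

/-- Lemma 5.4 (case where (d) fails): a real symmetric matrix with connected graph,
nonnegative off-diagonal entries, and a positive vector `m` with `∑ᵢ mᵢ aᵢⱼ = 0`
for every `j`, has rank `n - 1`. -/
theorem rank_eq_sub_one {n : ℕ} (A : Matrix (Fin n) (Fin n) ℝ)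
    (hsym : A.IsSymm)
    (hconn : (SimpleGraph.fromRel (fun i j => A i j ≠ 0)).Connected)
    (hoff : ∀ i j : Fin n, i ≠ j → 0 ≤ A i j)
    (m : Fin n → ℝ) (hm : ∀ i, 0 < m i)
    (heq : ∀ j, ∑ i, m i * A i j = 0) :
    A.rank = n - 1 := by
  obtain ⟨i0⟩ : Nonempty (Fin n) := hconn.nonempty
  have hsa : ∀ i j, A i j = A j i := fun i j => hsym.apply j i
  have h1 : ∀ i, ∑ j, m j * A i j = 0 := by
    intro i
    calc ∑ j, m j * A i j = ∑ j, m j * A j i :=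
          Finset.sum_congr rfl fun j _ => by rw [hsa i j]
      _ = 0 := heq i
  have hmker : A.mulVec m = 0 := by
    funext i
    simp only [Matrix.mulVec, dotProduct, Pi.zero_apply]
    calc ∑ j, A i j * m j = ∑ j, m j * A i j :=
          Finset.sum_congr rfl fun j _ => mul_comm _ _
      _ = 0 := h1 i
  have hmne : m ≠ 0 := fun h => (hm i0).ne' (congrFun h i0)
  -- kernel = span m
  have hker : LinearMap.ker A.mulVecLin = Submodule.span ℝ {m} := by
    apply le_antisymm
    · intro x hx
      have hx0 : A.mulVec x = 0 := hx
      set y : Fin n → ℝ := fun i => x i / m i with hy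
      have hxy : ∀ i, x i = m i * y i := by
        intro i; simp only [hy]; field_simp [(hm i).ne']
      have hS : (∑ i, ∑ j, (m i * m j * A i j) * (y i - y j) ^ 2) = 0 := by
        have e : ∀ i j, (m i * m j * A i j) * (y i - y j) ^ 2
            = (m i * y i ^ 2 * (m j * A i j) + m j * y j ^ 2 * (m i * A i j))
              - 2 * (m i * y i * (A i j * x j)) := by
          intro i j; rw [hxy j]; ring
        calc (∑ i, ∑ j, (m i * m j * A i j) * (y i - y j) ^ 2)
            = ∑ i, ∑ j, ((m i * y i ^ 2 * (m j * A i j) + m j * y j ^ 2 * (m i * A i j))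
              - 2 * (m i * y i * (A i j * x j))) :=
              Finset.sum_congr rfl fun i _ => Finset.sum_congr rfl fun j _ => e i j
          _ = ((∑ i, ∑ j, m i * y i ^ 2 * (m j * A i j))
                + ∑ i, ∑ j, m j * y j ^ 2 * (m i * A i j))
              - ∑ i, ∑ j, 2 * (m i * y i * (A i j * x j)) := by
              simp [Finset.sum_sub_distrib, Finset.sum_add_distrib]
          _ = 0 := by
              have t1 : (∑ i, ∑ j, m i * y i ^ 2 * (m j * A i j)) = 0 := by
                apply Finset.sum_eq_zero; intro i _
                rw [← Finset.mul_sum, h1 i, mul_zero]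
              have t2 : (∑ i, ∑ j, m j * y j ^ 2 * (m i * A i j)) = 0 := by
                rw [Finset.sum_comm]
                apply Finset.sum_eq_zero; intro j _
                rw [← Finset.mul_sum, heq j, mul_zero]
              have t3 : (∑ i, ∑ j, 2 * (m i * y i * (A i j * x j))) = 0 := by
                apply Finset.sum_eq_zero; intro i _
                have : (∑ j, A i j * x j) = 0 := congrFun hx0 i
                calc (∑ j, 2 * (m i * y i * (A i j * x j)))
                    = 2 * (m i * y i) * ∑ j, A i j * x j := by
                      rw [Finset.mul_sum]; exact Finset.sum_congr rfl fun j _ => by ring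
                  _ = 0 := by rw [this, mul_zero]
              rw [t1, t2, t3]; ring
      have hnn : ∀ i j : Fin n, 0 ≤ (m i * m j * A i j) * (y i - y j) ^ 2 := by
        intro i j
        rcases eq_or_ne i j with rfl | hij
        · simp
        · exact mul_nonneg (mul_nonneg (mul_nonneg (hm i).le (hm j).le) (hoff i j hij))
            (sq_nonneg _)
      have hterm : ∀ i j : Fin n, (m i * m j * A i j) * (y i - y j) ^ 2 = 0 := by
        intro i j
        have houter := (Finset.sum_eq_zero_iff_of_nonneg
          (fun i _ => Finset.sum_nonneg fun j _ => hnn i j)).mp hS i (Finset.mem_univ i)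
        exact (Finset.sum_eq_zero_iff_of_nonneg (fun j _ => hnn i j)).mp houter j
          (Finset.mem_univ j)
      have hadj : ∀ i j : Fin n,
          (SimpleGraph.fromRel (fun i j => A i j ≠ 0)).Adj i j → y i = y j := by
        intro i j hij
        rw [SimpleGraph.fromRel_adj] at hij
        obtain ⟨hne, hA⟩ := hij
        have hA' : A i j ≠ 0 := by
          rcases hA with h | h
          · exact h
          · rw [hsa i j]; exact h
        have hpos : 0 < m i * m j * A i j :=
          mul_pos (mul_pos (hm i) (hm j)) (lt_of_le_of_ne (hoff i j hne) (Ne.symm hA'))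
        have := hterm i j
        have hsq : (y i - y j) ^ 2 = 0 := by
          by_contra h
          exact h (by
            have := mul_eq_zero.mp this
            rcases this with h' | h'
            · exact absurd h' hpos.ne'
            · exact h')
        have := pow_eq_zero_iff (n := 2) (by norm_num) |>.mp hsq
        linarith [sub_eq_zero.mp this]
      have hconst : ∀ i j : Fin n, y i = y j := by
        intro i j
        obtain ⟨w⟩ := hconn.preconnected i j
        induction w with
        | nil => rfl
        | cons h p ih => exact (hadj _ _ h).trans ih
      have : x = y i0 • m := by
        funext i
        rw [hxy i, Pi.smul_apply, smul_eq_mul, hconst i i0]; ring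
      rw [this]
      exact Submodule.smul_mem _ _ (Submodule.mem_span_singleton_self m)
    · rw [Submodule.span_singleton_le_iff_mem]
      exact hmker
  have hrn := LinearMap.finrank_range_add_finrank_ker A.mulVecLin
  rw [hker, finrank_span_singleton hmne] at hrn
  have hfin : Module.finrank ℝ (Fin n → ℝ) = n := Module.finrank_fin_fun ℝ
  rw [hfin] at hrn
  have : A.rank = Module.finrank ℝ (LinearMap.range A.mulVecLin) := rfl
  rw [this]
  omega
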